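/- Let P and P̂ be probability distributions on ℝ^N with finite second moments, means μ and μ̂, and covariance matrices Σ and Σ̂. If the 2-Wasserstein distance W(P, P̂) ≤ ε, then ‖μ − μ̂‖ ≤ ε and (1/2)Tr(Σ) − Tr(Σ̂) ≤ ε². -/

import Mathlib

open MeasureTheory

lemma integral_sq_sub_mean' {α : Type*} [MeasurableSpace α] (m : Measure α)
    [IsProbabilityMeasure m] {f : α → ℝ} (hf : MemLp f 2 m) :
    ∫ x, (f x - ∫ y, f y ∂m)^2 ∂m = (∫ x, (f x)^2 ∂m) - (∫ x, f x ∂m)^2 := by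
  have h2 : Integrable f m := hf.integrable one_le_two
  have h1 : Integrable (fun x => (f x)^2) m := hf.integrable_sq
  set c := ∫ y, f y ∂m with hc
  have he : ∀ x, (f x - c)^2 = ((f x)^2 - (2*c) * f x) + c^2 := by intro x; ring
  have hint2 : Integrable (fun x => (2*c) * f x) m := h2.const_mul _
  have hint1 : Integrable (fun x => (f x)^2 - (2*c) * f x) m := h1.sub hint2
  simp_rw [he]
  rw [integral_add hint1 (integrable_const _), integral_sub h1 hint2,
      integral_const_mul, integral_const]
  simp only [measure_univ, probReal_univ, ENNReal.toReal_one, smul_eq_mul, one_mul]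
  ring

/-- If the 2-Wasserstein distance between `P` and `Q` is at most `ε` (witnessed by a
coupling with second moment cost at most `ε²`), then the means satisfy `‖μ − ν‖ ≤ ε`
and the covariance traces satisfy `(1/2)Tr(Σ₁) − Tr(Σ₂) ≤ ε²`. -/
theorem wasserstein_moment_bounds {N : ℕ}
    (P Q : Measure (Fin N → ℝ)) [IsProbabilityMeasure P] [IsProbabilityMeasure Q]
    (hP2 : MemLp (fun d => d) 2 P) (hQ2 : MemLp (fun d => d) 2 Q)
    (μ ν : Fin N → ℝ)
    (hμ : ∀ i, μ i = ∫ d, d i ∂P) (hν : ∀ i, ν i = ∫ d, d i ∂Q)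
    (S1 S2 : Matrix (Fin N) (Fin N) ℝ)
    (hS1 : ∀ i j, S1 i j = ∫ d, (d i - μ i) * (d j - μ j) ∂P)
    (hS2 : ∀ i j, S2 i j = ∫ d, (d i - ν i) * (d j - ν j) ∂Q)
    (ε : ℝ) (hε : 0 ≤ ε)
    (hW : ∃ π : Measure ((Fin N → ℝ) × (Fin N → ℝ)), IsProbabilityMeasure π ∧
      π.map Prod.fst = P ∧ π.map Prod.snd = Q ∧
      ∫ dd, (∑ i, (dd.1 i - dd.2 i) ^ 2) ∂π ≤ ε ^ 2) :
    Real.sqrt (∑ i, (μ i - ν i) ^ 2) ≤ ε ∧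
    (1 / 2) * S1.trace - S2.trace ≤ ε ^ 2 := by
  obtain ⟨π, hπprob, hfst, hsnd, hcost⟩ := hW
  -- coordinate functions are in L² over P and Q
  have hPi : ∀ i, MemLp (fun d : Fin N → ℝ => d i) 2 P := fun i =>
    (ContinuousLinearMap.proj (R := ℝ) (φ := fun _ : Fin N => ℝ) i).comp_memLp' hP2
  have hQi : ∀ i, MemLp (fun d : Fin N → ℝ => d i) 2 Q := fun i =>
    (ContinuousLinearMap.proj (R := ℝ) (φ := fun _ : Fin N => ℝ) i).comp_memLp' hQ2
  have hmi : ∀ i : Fin N, Measurable (fun d : Fin N → ℝ => d i) := fun i => measurable_pi_apply i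
  -- pull back to the coupling
  have hXi : ∀ i, MemLp (fun dd : (Fin N → ℝ) × (Fin N → ℝ) => dd.1 i) 2 π := by
    intro i
    have h := hPi i
    rw [← hfst] at h
    exact (memLp_map_measure_iff ((hmi i).aestronglyMeasurable) measurable_fst.aemeasurable).mp h
  have hYi : ∀ i, MemLp (fun dd : (Fin N → ℝ) × (Fin N → ℝ) => dd.2 i) 2 π := by
    intro i
    have h := hQi i
    rw [← hsnd] at h
    exact (memLp_map_measure_iff ((hmi i).aestronglyMeasurable) measurable_snd.aemeasurable).mp h
  have hfi : ∀ i, MemLp (fun dd : (Fin N → ℝ) × (Fin N → ℝ) => dd.1 i - dd.2 i) 2 π :=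
    fun i => (hXi i).sub (hYi i)
  -- integrals pull back
  have hintX : ∀ i, ∫ dd, dd.1 i ∂π = ∫ d, d i ∂P := by
    intro i
    rw [← hfst, integral_map measurable_fst.aemeasurable ((hmi i).aestronglyMeasurable)]
  have hintY : ∀ i, ∫ dd, dd.2 i ∂π = ∫ d, d i ∂Q := by
    intro i
    rw [← hsnd, integral_map measurable_snd.aemeasurable ((hmi i).aestronglyMeasurable)]
  have hmean : ∀ i, ∫ dd, (dd.1 i - dd.2 i) ∂π = μ i - ν i := by
    intro i
    rw [integral_sub ((hXi i).integrable one_le_two) ((hYi i).integrable one_le_two),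
      hintX, hintY, hμ, hν]
  -- cost bound termwise
  have hsqint : ∀ i, Integrable (fun dd : (Fin N → ℝ) × (Fin N → ℝ) =>
      (dd.1 i - dd.2 i)^2) π := fun i => (hfi i).integrable_sq
  have hcost' : ∑ i, ∫ dd, (dd.1 i - dd.2 i)^2 ∂π ≤ ε ^ 2 := by
    rw [← integral_finset_sum _ (fun i _ => hsqint i)]
    exact hcost
  have hterm_nonneg : ∀ i : Fin N, 0 ≤ ∫ dd, (dd.1 i - dd.2 i)^2 ∂π := fun i =>
    integral_nonneg (fun x => sq_nonneg _)
  -- Jensen: (μ i - ν i)^2 ≤ ∫ f_i²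
  have hjensen : ∀ i, (μ i - ν i)^2 ≤ ∫ dd, (dd.1 i - dd.2 i)^2 ∂π := by
    intro i
    have h := integral_sq_sub_mean' π (hfi i)
    have h0 : 0 ≤ ∫ dd, ((dd.1 i - dd.2 i) - ∫ dd, (dd.1 i - dd.2 i) ∂π)^2 ∂π :=
      integral_nonneg (fun x => sq_nonneg _)
    rw [h, hmean] at h0
    linarith
  constructor
  · have h1 : ∑ i, (μ i - ν i)^2 ≤ ε^2 :=
      le_trans (Finset.sum_le_sum fun i _ => hjensen i) hcost'
    calc Real.sqrt (∑ i, (μ i - ν i) ^ 2) ≤ Real.sqrt (ε^2) := Real.sqrt_le_sqrt h1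
      _ = ε := Real.sqrt_sq hε
  · -- traces
    have hS1diag : ∀ i : Fin N, S1 i i = ∫ dd, (dd.1 i - μ i)^2 ∂π := by
      intro i
      rw [hS1, ← hfst,
        integral_map measurable_fst.aemeasurable (f := fun d : Fin N → ℝ => (d i - μ i) * (d i - μ i))
          (((hmi i).sub measurable_const).mul ((hmi i).sub measurable_const)).aestronglyMeasurable]
      simp [pow_two]
    have hS2diag : ∀ i : Fin N, S2 i i = ∫ dd, (dd.2 i - ν i)^2 ∂π := by
      intro i
      rw [hS2, ← hsnd,
        integral_map measurable_snd.aemeasurable (f := fun d : Fin N → ℝ => (d i - ν i) * (d i - ν i))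
          (((hmi i).sub measurable_const).mul ((hmi i).sub measurable_const)).aestronglyMeasurable]
      simp [pow_two]
    -- key pointwise inequality integrated
    have hkey : ∀ i : Fin N, S1 i i ≤ 2 * ∫ dd, (dd.1 i - dd.2 i)^2 ∂π + 2 * S2 i i := by
      intro i
      have hXmem : MemLp (fun dd : (Fin N → ℝ) × (Fin N → ℝ) => dd.1 i - μ i) 2 π :=
        (hXi i).sub (memLp_const _)
      have hYmem : MemLp (fun dd : (Fin N → ℝ) × (Fin N → ℝ) => dd.2 i - ν i) 2 π :=
        (hYi i).sub (memLp_const _)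
      have hgmem : MemLp (fun dd : (Fin N → ℝ) × (Fin N → ℝ) =>
          (dd.1 i - dd.2 i) - (μ i - ν i)) 2 π := (hfi i).sub (memLp_const _)
      have hmono : ∫ dd, (dd.1 i - μ i)^2 ∂π ≤
          ∫ dd, (2 * ((dd.1 i - dd.2 i) - (μ i - ν i))^2 + 2 * (dd.2 i - ν i)^2) ∂π := by
        apply integral_mono hXmem.integrable_sq
          (((hgmem.integrable_sq).const_mul 2).add ((hYmem.integrable_sq).const_mul 2))
        intro dd
        simp only [Pi.add_apply]
        nlinarith [sq_nonneg ((dd.1 i - dd.2 i) - (μ i - ν i) - (dd.2 i - ν i))]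
      rw [integral_add ((hgmem.integrable_sq).const_mul 2) ((hYmem.integrable_sq).const_mul 2),
        integral_const_mul, integral_const_mul] at hmono
      have hvar : ∫ dd, ((dd.1 i - dd.2 i) - (μ i - ν i))^2 ∂π ≤
          ∫ dd, (dd.1 i - dd.2 i)^2 ∂π := by
        have h := integral_sq_sub_mean' π (hfi i)
        rw [hmean] at h
        nlinarith [sq_nonneg (μ i - ν i)]
      rw [hS1diag, hS2diag]
      linarith
    have htr1 : S1.trace = ∑ i, S1 i i := by simp [Matrix.trace, Matrix.diag]
    have htr2 : S2.trace = ∑ i, S2 i i := by simp [Matrix.trace, Matrix.diag]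
    have hsum : ∑ i, S1 i i ≤ 2 * (∑ i, ∫ dd, (dd.1 i - dd.2 i)^2 ∂π) + 2 * ∑ i, S2 i i := by
      calc ∑ i, S1 i i ≤ ∑ i, (2 * ∫ dd, (dd.1 i - dd.2 i)^2 ∂π + 2 * S2 i i) :=
            Finset.sum_le_sum fun i _ => hkey i
        _ = 2 * (∑ i, ∫ dd, (dd.1 i - dd.2 i)^2 ∂π) + 2 * ∑ i, S2 i i := by
            rw [Finset.sum_add_distrib, ← Finset.mul_sum, ← Finset.mul_sum]
    rw [htr1, htr2]
    linarith
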